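/- With D a non-Lagrangian 2-distribution on U ⊆ ℝ⁴, D' its Ω-orthogonal complement, ρ := ι_Z Ω, ρ' := ι_{Z'} Ω and σ := ρ − ρ' the invariant 1-forms: one has Ω ∧ dσ = 0, and consequently Ω ∧ dρ = Ω ∧ dρ' as 4-forms on U (so the first scalar invariant I¹ takes the same value on D and on D'). -/

import Mathlib

noncomputable section

/-- Vectors of `ℝ⁴`, with coordinates `(x,p,y,q) = (v 0, v 1, v 2, v 3)`. -/
abbrev Vec : Type := Fin 4 → ℝ

/-- The standard symplectic form `Ω = dp∧dx + dq∧dy` on `ℝ⁴`. -/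
def Omega (u v : Vec) : ℝ := u 1 * v 0 - u 0 * v 1 + u 3 * v 2 - u 2 * v 3

/-- Lie bracket of vector fields. -/
def vbracket (X Y : Vec → Vec) : Vec → Vec :=
  fun x => fderiv ℝ Y x (X x) - fderiv ℝ X x (Y x)

/-- Exterior derivative of a 1-form (a pointwise family of 1-form values). -/
def d1 (α : Vec → Vec → ℝ) : Vec → Vec → Vec → ℝ :=
  fun x u v => fderiv ℝ (fun y => α y v) x u - fderiv ℝ (fun y => α y u) x v

/-- Exterior derivative of a 2-form. -/
def d2 (b : Vec → Vec → Vec → ℝ) : Vec → Vec → Vec → Vec → ℝ :=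
  fun x u v w => fderiv ℝ (fun y => b y v w) x u - fderiv ℝ (fun y => b y u w) x v
    + fderiv ℝ (fun y => b y u v) x w

/-- Exterior derivative of a 3-form. -/
def d3 (c : Vec → Vec → Vec → Vec → ℝ) : Vec → Vec → Vec → Vec → Vec → ℝ :=
  fun x u v w z =>
    fderiv ℝ (fun y => c y v w z) x u - fderiv ℝ (fun y => c y u w z) x v
      + fderiv ℝ (fun y => c y u v z) x w - fderiv ℝ (fun y => c y u v w) x z

/-- Wedge product of two 1-form values. -/
def w11 (a b : Vec → ℝ) : Vec → Vec → ℝ := fun u v => a u * b v - a v * b u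

/-- Wedge product of a 2-form value with a 1-form value. -/
def w21 (b : Vec → Vec → ℝ) (t : Vec → ℝ) : Vec → Vec → Vec → ℝ :=
  fun u v w => b u v * t w - b u w * t v + b v w * t u

/-- Wedge product of two 2-form values. -/
def w22 (a b : Vec → Vec → ℝ) : Vec → Vec → Vec → Vec → ℝ :=
  fun u v w z => a u v * b w z - a u w * b v z + a u z * b v w
    + a v w * b u z - a v z * b u w + a w z * b u v

/-! ### Auxiliary lemmas -/

section OmegaLemmas
variable (u u' v v' : Vec) (c : ℝ)
lemma Omega_add_left : Omega (u + u') v = Omega u v + Omega u' v := by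
  simp only [Omega, Pi.add_apply]; ring
lemma Omega_sub_left : Omega (u - u') v = Omega u v - Omega u' v := by
  simp only [Omega, Pi.sub_apply]; ring
lemma Omega_smul_left : Omega (c • u) v = c * Omega u v := by
  simp only [Omega, Pi.smul_apply, smul_eq_mul]; ring
lemma Omega_add_right : Omega u (v + v') = Omega u v + Omega u v' := by
  simp only [Omega, Pi.add_apply]; ring
lemma Omega_sub_right : Omega u (v - v') = Omega u v - Omega u v' := by
  simp only [Omega, Pi.sub_apply]; ring
lemma Omega_smul_right : Omega u (c • v) = c * Omega u v := by
  simp only [Omega, Pi.smul_apply, smul_eq_mul]; ring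
lemma Omega_swap : Omega u v = - Omega v u := by simp only [Omega]; ring
lemma Omega_self : Omega u u = 0 := by simp only [Omega]; ring
lemma Omega_zero_left : Omega 0 v = 0 := by simp only [Omega, Pi.zero_apply]; ring
lemma Omega_zero_right : Omega u 0 = 0 := by simp only [Omega, Pi.zero_apply]; ring
end OmegaLemmas

/-- `Omega (· , b)` as a continuous linear map. -/
def omR (b : Vec) : Vec →L[ℝ] ℝ :=
  b 0 • ContinuousLinearMap.proj 1 - b 1 • ContinuousLinearMap.proj 0
    + b 2 • ContinuousLinearMap.proj 3 - b 3 • ContinuousLinearMap.proj 2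

lemma omR_apply (b u : Vec) : omR b u = Omega u b := by
  simp only [omR, Omega, ContinuousLinearMap.sub_apply, ContinuousLinearMap.add_apply,
    ContinuousLinearMap.smul_apply, ContinuousLinearMap.proj_apply, smul_eq_mul]
  ring

/-- `Omega (a, ·)` as a continuous linear map. -/
def omL (a : Vec) : Vec →L[ℝ] ℝ :=
  a 1 • ContinuousLinearMap.proj 0 - a 0 • ContinuousLinearMap.proj 1
    + a 3 • ContinuousLinearMap.proj 2 - a 2 • ContinuousLinearMap.proj 3

lemma omL_apply (a u : Vec) : omL a u = Omega a u := by
  simp only [omL, Omega, ContinuousLinearMap.sub_apply, ContinuousLinearMap.add_apply,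
    ContinuousLinearMap.smul_apply, ContinuousLinearMap.proj_apply, smul_eq_mul]

section FderivHelpers
variable {g : Vec → Vec} {x : Vec}

lemma diffAt_omega_left (hg : DifferentiableAt ℝ g x) (b : Vec) :
    DifferentiableAt ℝ (fun t => Omega (g t) b) x := by
  have h : (fun t => Omega (g t) b) = fun t => omR b (g t) := by
    funext t; rw [omR_apply]
  rw [h]
  exact ((omR b).differentiableAt).comp x hg

lemma fderiv_omega_left (hg : DifferentiableAt ℝ g x) (b u : Vec) :
    fderiv ℝ (fun t => Omega (g t) b) x u = Omega (fderiv ℝ g x u) b := by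
  have h : (fun t => Omega (g t) b) = (omR b) ∘ g := by
    funext t; simp only [Function.comp_apply, omR_apply]
  rw [h, fderiv_comp x (omR b).differentiableAt hg, (omR b).fderiv]
  simp [omR_apply]

lemma diffAt_omega_right (hg : DifferentiableAt ℝ g x) (a : Vec) :
    DifferentiableAt ℝ (fun t => Omega a (g t)) x := by
  have h : (fun t => Omega a (g t)) = fun t => omL a (g t) := by
    funext t; rw [omL_apply]
  rw [h]
  exact ((omL a).differentiableAt).comp x hg

lemma fderiv_omega_right (hg : DifferentiableAt ℝ g x) (a u : Vec) :
    fderiv ℝ (fun t => Omega a (g t)) x u = Omega a (fderiv ℝ g x u) := by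
  have h : (fun t => Omega a (g t)) = (omL a) ∘ g := by
    funext t; simp only [Function.comp_apply, omL_apply]
  rw [h, fderiv_comp x (omL a).differentiableAt hg, (omL a).fderiv]
  simp [omL_apply]

end FderivHelpers

section ClmHelpers
variable {F : Type} [NormedAddCommGroup F] [NormedSpace ℝ F] {Pm : Vec → Vec →L[ℝ] F} {x : Vec}

lemma fderiv_clm_const (hP : DifferentiableAt ℝ Pm x) (a u : Vec) :
    fderiv ℝ (fun t => Pm t a) x u = fderiv ℝ Pm x u a := by
  rw [fderiv_clm_apply hP (differentiableAt_const a)]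
  simp

end ClmHelpers

lemma span_frame {X Y X' Y' : Vec}
    (h1 : Omega X Y = 1) (h2 : Omega X' Y' = 1)
    (o1 : Omega X X' = 0) (o2 : Omega X Y' = 0) (o3 : Omega Y X' = 0) (o4 : Omega Y Y' = 0)
    (v : Vec) : ∃ a b c d : ℝ, v = a • X + b • Y + c • X' + d • Y' := by
  have li : LinearIndependent ℝ ![X, Y, X', Y'] := by
    rw [Fintype.linearIndependent_iff]
    intro g hg
    simp only [Fin.sum_univ_four, Matrix.cons_val_zero, Matrix.cons_val_one, Matrix.head_cons,
      Matrix.cons_val_two, Matrix.tail_cons, Matrix.cons_val_three] at hg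
    have key : ∀ w : Vec, g 0 * Omega X w + g 1 * Omega Y w + g 2 * Omega X' w
        + g 3 * Omega Y' w = 0 := by
      intro w
      have h0 := congrArg (fun z => Omega z w) hg
      simp only [Omega_add_left, Omega_smul_left, Omega_zero_left] at h0
      linarith [h0]
    have e1 := key Y
    have e2 := key X
    have e3 := key Y'
    have e4 := key X'
    rw [Omega_self] at e1 e2 e3 e4
    rw [h1, show Omega X' Y = 0 by rw [Omega_swap, o3, neg_zero],
      show Omega Y' Y = 0 by rw [Omega_swap, o4, neg_zero]] at e1
    rw [show Omega Y X = -1 by rw [Omega_swap, h1],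
      show Omega X' X = 0 by rw [Omega_swap, o1, neg_zero],
      show Omega Y' X = 0 by rw [Omega_swap, o2, neg_zero]] at e2
    rw [o2, o4, h2] at e3
    rw [o1, o3, show Omega Y' X' = -1 by rw [Omega_swap, h2]] at e4
    intro i
    fin_cases i
    · show g 0 = 0; linarith
    · show g 1 = 0; linarith
    · show g 2 = 0; linarith
    · show g 3 = 0; linarith
  have hsp : Submodule.span ℝ (Set.range ![X, Y, X', Y']) = ⊤ :=
    li.span_eq_top_of_card_eq_finrank (by simp [Module.finrank_fin_fun])
  have hv : v ∈ Submodule.span ℝ (Set.range ![X, Y, X', Y']) := by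
    rw [hsp]; exact Submodule.mem_top
  obtain ⟨c, hc⟩ := (Submodule.mem_span_range_iff_exists_fun ℝ).mp hv
  refine ⟨c 0, c 1, c 2, c 3, ?_⟩
  rw [← hc]
  simp [Fin.sum_univ_four]

lemma algebra_key (Q : Vec →L[ℝ] Vec →L[ℝ] Vec) (Pm : Vec →L[ℝ] Vec) {X Y X' Y' : Vec}
    (h1 : Omega X Y = 1) (h2 : Omega X' Y' = 1)
    (o1 : Omega X X' = 0) (o2 : Omega X Y' = 0) (o3 : Omega Y X' = 0) (o4 : Omega Y Y' = 0)
    (pX : Pm X = X) (pY : Pm Y = Y) (pX' : Pm X' = 0) (pY' : Pm Y' = 0)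
    (hsym : ∀ u a b : Vec, Omega (Q u a) b = Omega a (Q u b))
    (hz1 : ∀ u a b : Vec, Pm a = a → Pm b = b → Omega (Q u a) b = 0)
    (hz2 : ∀ u a b : Vec, Pm a = 0 → Pm b = 0 → Omega (Q u a) b = 0)
    (u v w : Vec) :
    Omega (Q u v) w - Omega (Q v u) w + Omega (Q w u) v
      = Omega u v * Omega (Q X Y - Q Y X + Q X' Y' - Q Y' X') w
        - Omega u w * Omega (Q X Y - Q Y X + Q X' Y' - Q Y' X') v
        + Omega v w * Omega (Q X Y - Q Y X + Q X' Y' - Q Y' X') u := by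
  obtain ⟨a1, a2, a3, a4, hu⟩ := span_frame h1 h2 o1 o2 o3 o4 u
  obtain ⟨b1, b2, b3, b4, hv⟩ := span_frame h1 h2 o1 o2 o3 o4 v
  obtain ⟨c1, c2, c3, c4, hw⟩ := span_frame h1 h2 o1 o2 o3 o4 w
  subst hu hv hw
  have gYX : Omega Y X = -1 := by rw [Omega_swap, h1]
  have gY'X' : Omega Y' X' = -1 := by rw [Omega_swap, h2]
  have gX'X : Omega X' X = 0 := by rw [Omega_swap, o1, neg_zero]
  have gY'X : Omega Y' X = 0 := by rw [Omega_swap, o2, neg_zero]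
  have gX'Y : Omega X' Y = 0 := by rw [Omega_swap, o3, neg_zero]
  have gY'Y : Omega Y' Y = 0 := by rw [Omega_swap, o4, neg_zero]
  have qXX : ∀ t : Vec, Omega (Q t X) X = 0 := fun t => hz1 t X X pX pX
  have qXY : ∀ t : Vec, Omega (Q t X) Y = 0 := fun t => hz1 t X Y pX pY
  have qYX : ∀ t : Vec, Omega (Q t Y) X = 0 := fun t => hz1 t Y X pY pX
  have qYY : ∀ t : Vec, Omega (Q t Y) Y = 0 := fun t => hz1 t Y Y pY pY
  have qX'X' : ∀ t : Vec, Omega (Q t X') X' = 0 := fun t => hz2 t X' X' pX' pX'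
  have qX'Y' : ∀ t : Vec, Omega (Q t X') Y' = 0 := fun t => hz2 t X' Y' pX' pY'
  have qY'X' : ∀ t : Vec, Omega (Q t Y') X' = 0 := fun t => hz2 t Y' X' pY' pX'
  have qY'Y' : ∀ t : Vec, Omega (Q t Y') Y' = 0 := fun t => hz2 t Y' Y' pY' pY'
  have cX'X : ∀ t : Vec, Omega (Q t X') X = -Omega (Q t X) X' := fun t => by
    rw [hsym t X' X, Omega_swap]
  have cX'Y : ∀ t : Vec, Omega (Q t X') Y = -Omega (Q t Y) X' := fun t => by
    rw [hsym t X' Y, Omega_swap]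
  have cY'X : ∀ t : Vec, Omega (Q t Y') X = -Omega (Q t X) Y' := fun t => by
    rw [hsym t Y' X, Omega_swap]
  have cY'Y : ∀ t : Vec, Omega (Q t Y') Y = -Omega (Q t Y) Y' := fun t => by
    rw [hsym t Y' Y, Omega_swap]
  simp only [map_add, map_smul, map_sub, ContinuousLinearMap.add_apply,
    ContinuousLinearMap.smul_apply, ContinuousLinearMap.sub_apply,
    Omega_add_left, Omega_smul_left, Omega_add_right, Omega_smul_right,
    Omega_sub_left, Omega_sub_right, smul_eq_mul]
  simp only [qXX, qXY, qYX, qYY, qX'X', qX'Y', qY'X', qY'Y', cX'X, cX'Y, cY'X, cY'Y,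
    h1, h2, o1, o2, o3, o4, gYX, gY'X', gX'X, gY'X, gX'Y, gY'Y, Omega_self]
  ring

/-- for a non-Lagrangian 2-distribution `D` on `U ⊆ ℝ⁴` with
invariant 1-forms `ρ, ρ', σ = ρ − ρ'`, one has `Ω ∧ dσ = 0` and consequently
`Ω ∧ dρ = Ω ∧ dρ'` as 4-forms on `U`. -/
theorem stmt_7
    (U : Set Vec) (hU : IsOpen U)
    (X Y X' Y' : Vec → Vec) (P : Vec → Vec →L[ℝ] Vec)
    (hX : ContDiffOn ℝ (⊤ : ℕ∞) X U) (hY : ContDiffOn ℝ (⊤ : ℕ∞) Y U)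
    (hX' : ContDiffOn ℝ (⊤ : ℕ∞) X' U) (hY' : ContDiffOn ℝ (⊤ : ℕ∞) Y' U)
    (hP : ContDiffOn ℝ (⊤ : ℕ∞) P U)
    (hXY : ∀ x ∈ U, Omega (X x) (Y x) = 1)
    (hX'Y' : ∀ x ∈ U, Omega (X' x) (Y' x) = 1)
    (horth : ∀ x ∈ U, Omega (X x) (X' x) = 0 ∧ Omega (X x) (Y' x) = 0 ∧
      Omega (Y x) (X' x) = 0 ∧ Omega (Y x) (Y' x) = 0)
    (hProj : ∀ x ∈ U, P x (X x) = X x ∧ P x (Y x) = Y x ∧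
      P x (X' x) = 0 ∧ P x (Y' x) = 0)
    (Z Z' : Vec → Vec)
    (hZ : Z = fun x => vbracket X Y x - P x (vbracket X Y x))
    (hZ' : Z' = fun x => P x (vbracket X' Y' x))
    (ρ ρ' σ : Vec → Vec → ℝ)
    (hρ : ρ = fun x v => Omega (Z x) v)
    (hρ' : ρ' = fun x v => Omega (Z' x) v)
    (hσ : σ = fun x v => ρ x v - ρ' x v)
    (ω : Vec → Vec → Vec → ℝ)
    (hω : ω = fun x u v => (Omega (P x u) v + Omega u (P x v)) / 2)
    :
    ∀ x ∈ U, ∀ a b c d : Vec,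
      w22 Omega (d1 σ x) a b c d = 0 ∧
      w22 Omega (d1 ρ x) a b c d = w22 Omega (d1 ρ' x) a b c d := by
  -- basic differentiability on U
  have hdiffP : ∀ y ∈ U, DifferentiableAt ℝ P y := fun y hy =>
    (hP.contDiffAt (hU.mem_nhds hy)).differentiableAt (by simp)
  have hdiffX : ∀ y ∈ U, DifferentiableAt ℝ X y := fun y hy =>
    (hX.contDiffAt (hU.mem_nhds hy)).differentiableAt (by simp)
  have hdiffY : ∀ y ∈ U, DifferentiableAt ℝ Y y := fun y hy =>
    (hY.contDiffAt (hU.mem_nhds hy)).differentiableAt (by simp)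
  have hdiffX' : ∀ y ∈ U, DifferentiableAt ℝ X' y := fun y hy =>
    (hX'.contDiffAt (hU.mem_nhds hy)).differentiableAt (by simp)
  have hdiffY' : ∀ y ∈ U, DifferentiableAt ℝ Y' y := fun y hy =>
    (hY'.contDiffAt (hU.mem_nhds hy)).differentiableAt (by simp)
  -- spanning property of the frame
  have hspan : ∀ y ∈ U, ∀ v : Vec, ∃ a b c d : ℝ,
      v = a • X y + b • Y y + c • X' y + d • Y' y := fun y hy =>
    span_frame (hXY y hy) (hX'Y' y hy) (horth y hy).1 (horth y hy).2.1
      (horth y hy).2.2.1 (horth y hy).2.2.2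
  -- explicit formula for the projector
  have hcoP : ∀ y ∈ U, ∀ v : Vec,
      P y v = Omega v (Y y) • X y - Omega v (X y) • Y y := by
    intro y hy v
    obtain ⟨a, b, c, d, hv⟩ := hspan y hy v
    obtain ⟨p1, p2, p3, p4⟩ := hProj y hy
    subst hv
    have gYX : Omega (Y y) (X y) = -1 := by rw [Omega_swap, hXY y hy]
    have gX'X : Omega (X' y) (X y) = 0 := by rw [Omega_swap, (horth y hy).1, neg_zero]
    have gX'Y : Omega (X' y) (Y y) = 0 := by rw [Omega_swap, (horth y hy).2.2.1, neg_zero]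
    have gY'X : Omega (Y' y) (X y) = 0 := by rw [Omega_swap, (horth y hy).2.1, neg_zero]
    have gY'Y : Omega (Y' y) (Y y) = 0 := by rw [Omega_swap, (horth y hy).2.2.2, neg_zero]
    simp only [map_add, map_smul, p1, p2, p3, p4, smul_zero, add_zero,
      Omega_add_left, Omega_smul_left, hXY y hy, gYX, gX'X, gX'Y, gY'X, gY'Y, Omega_self]
    module
  -- Omega-symmetry of the projector
  have hPsym : ∀ y ∈ U, ∀ u v : Vec, Omega (P y u) v = Omega u (P y v) := by
    intro y hy u v
    rw [hcoP y hy u, hcoP y hy v]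
    simp only [Omega_sub_left, Omega_sub_right, Omega_smul_left, Omega_smul_right]
    rw [Omega_swap (X y) v, Omega_swap (Y y) v]
    ring
  -- idempotence of the projector
  have hPP : ∀ y ∈ U, ∀ v : Vec, P y (P y v) = P y v := by
    intro y hy v
    obtain ⟨p1, p2, p3, p4⟩ := hProj y hy
    rw [hcoP y hy v, map_sub, map_smul, map_smul, p1, p2]
  -- symmetry of the derivative of the projector
  have hQsym : ∀ y ∈ U, ∀ u a b : Vec,
      Omega (fderiv ℝ P y u a) b = Omega a (fderiv ℝ P y u b) := by
    intro y hy u a b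
    have hga : DifferentiableAt ℝ (fun t => P t a) y :=
      (hdiffP y hy).clm_apply (differentiableAt_const a)
    have hgb : DifferentiableAt ℝ (fun t => P t b) y :=
      (hdiffP y hy).clm_apply (differentiableAt_const b)
    have hfe : fderiv ℝ (fun t => Omega (P t a) b) y
        = fderiv ℝ (fun t => Omega a (P t b)) y := by
      apply Filter.EventuallyEq.fderiv_eq
      filter_upwards [hU.mem_nhds hy] with t ht
      exact hPsym t ht a b
    have h1 : fderiv ℝ (fun t => Omega (P t a) b) y u = Omega (fderiv ℝ P y u a) b := by
      rw [fderiv_omega_left hga b u, fderiv_clm_const (hdiffP y hy) a u]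
    have h2 : fderiv ℝ (fun t => Omega a (P t b)) y u = Omega a (fderiv ℝ P y u b) := by
      rw [fderiv_omega_right hgb a u, fderiv_clm_const (hdiffP y hy) b u]
    rw [← h1, ← h2, hfe]
  -- derivative of idempotence
  have hQblock : ∀ y ∈ U, ∀ u v : Vec,
      fderiv ℝ P y u (P y v) + P y (fderiv ℝ P y u v) = fderiv ℝ P y u v := by
    intro y hy u v
    have hPv : DifferentiableAt ℝ (fun t => P t v) y :=
      (hdiffP y hy).clm_apply (differentiableAt_const v)
    have hfe : fderiv ℝ (fun t => P t (P t v)) y = fderiv ℝ (fun t => P t v) y := by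
      apply Filter.EventuallyEq.fderiv_eq
      filter_upwards [hU.mem_nhds hy] with t ht
      exact hPP t ht v
    have h2 := fderiv_clm_apply (hdiffP y hy) hPv
    have h4 : ((P y).comp (fderiv ℝ (fun t => P t v) y)
        + (fderiv ℝ P y).flip (P y v)) u = fderiv ℝ (fun t => P t v) y u := by
      rw [← h2, hfe]
    simp only [ContinuousLinearMap.add_apply, ContinuousLinearMap.coe_comp',
      Function.comp_apply, ContinuousLinearMap.flip_apply] at h4
    rw [fderiv_clm_const (hdiffP y hy) v u] at h4
    rw [add_comm] at h4
    exact h4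
  -- block-vanishing of derivative of the projector
  have hz1 : ∀ y ∈ U, ∀ u a b : Vec, P y a = a → P y b = b →
      Omega (fderiv ℝ P y u a) b = 0 := by
    intro y hy u a b ha hb
    have h := hQblock y hy u a
    rw [ha] at h
    have h0 : P y (fderiv ℝ P y u a) = 0 := by
      exact add_eq_left.mp h
    calc Omega (fderiv ℝ P y u a) b = Omega (fderiv ℝ P y u a) (P y b) := by rw [hb]
      _ = Omega (P y (fderiv ℝ P y u a)) b := (hPsym y hy _ _).symm
      _ = 0 := by rw [h0, Omega_zero_left]
  have hz2 : ∀ y ∈ U, ∀ u a b : Vec, P y a = 0 → P y b = 0 →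
      Omega (fderiv ℝ P y u a) b = 0 := by
    intro y hy u a b ha hb
    have h := hQblock y hy u a
    rw [ha, map_zero, zero_add] at h
    calc Omega (fderiv ℝ P y u a) b = Omega (P y (fderiv ℝ P y u a)) b := by rw [h]
      _ = Omega (fderiv ℝ P y u a) (P y b) := hPsym y hy _ _
      _ = 0 := by rw [hb, Omega_zero_right]
  -- Z and Z' in terms of the derivative of P
  have hvbXY : ∀ y ∈ U, vbracket X Y y - P y (vbracket X Y y)
      = fderiv ℝ P y (X y) (Y y) - fderiv ℝ P y (Y y) (X y) := by
    intro y hy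
    have eF : ∀ (F : Vec → Vec), DifferentiableAt ℝ F y → (∀ t ∈ U, P t (F t) = F t) →
        ∀ u : Vec, fderiv ℝ P y u (F y) = fderiv ℝ F y u - P y (fderiv ℝ F y u) := by
      intro F hF hPF u
      have hfe : fderiv ℝ (fun t => P t (F t)) y = fderiv ℝ F y := by
        apply Filter.EventuallyEq.fderiv_eq
        filter_upwards [hU.mem_nhds hy] with t ht
        exact hPF t ht
      have h2 := fderiv_clm_apply (hdiffP y hy) hF
      have h4 : ((P y).comp (fderiv ℝ F y) + (fderiv ℝ P y).flip (F y)) u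
          = fderiv ℝ F y u := by rw [← h2, hfe]
      simp only [ContinuousLinearMap.add_apply, ContinuousLinearMap.coe_comp',
        Function.comp_apply, ContinuousLinearMap.flip_apply] at h4
      linear_combination (norm := module) h4
    have e1 := eF Y (hdiffY y hy) (fun t ht => (hProj t ht).2.1) (X y)
    have e2 := eF X (hdiffX y hy) (fun t ht => (hProj t ht).1) (Y y)
    show fderiv ℝ Y y (X y) - fderiv ℝ X y (Y y)
        - P y (fderiv ℝ Y y (X y) - fderiv ℝ X y (Y y)) = _
    rw [map_sub, e1, e2]
    module
  have hvbX'Y' : ∀ y ∈ U, P y (vbracket X' Y' y)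
      = fderiv ℝ P y (Y' y) (X' y) - fderiv ℝ P y (X' y) (Y' y) := by
    intro y hy
    have eF : ∀ (F : Vec → Vec), DifferentiableAt ℝ F y → (∀ t ∈ U, P t (F t) = 0) →
        ∀ u : Vec, fderiv ℝ P y u (F y) = - P y (fderiv ℝ F y u) := by
      intro F hF hPF u
      have hfe : fderiv ℝ (fun t => P t (F t)) y = 0 := by
        have : fderiv ℝ (fun t => P t (F t)) y = fderiv ℝ (fun _ => (0 : Vec)) y := by
          apply Filter.EventuallyEq.fderiv_eq
          filter_upwards [hU.mem_nhds hy] with t ht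
          exact hPF t ht
        rw [this, fderiv_fun_const]
        rfl
      have h2 := fderiv_clm_apply (hdiffP y hy) hF
      have h4 : ((P y).comp (fderiv ℝ F y) + (fderiv ℝ P y).flip (F y)) u
          = (0 : Vec →L[ℝ] Vec) u := by rw [← h2, hfe]
      simp only [ContinuousLinearMap.add_apply, ContinuousLinearMap.coe_comp',
        Function.comp_apply, ContinuousLinearMap.flip_apply,
        ContinuousLinearMap.zero_apply] at h4
      linear_combination (norm := module) h4
    have e1 := eF X' (hdiffX' y hy) (fun t ht => (hProj t ht).2.2.1) (Y' y)
    have e2 := eF Y' (hdiffY' y hy) (fun t ht => (hProj t ht).2.2.2) (X' y)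
    show P y (fderiv ℝ Y' y (X' y) - fderiv ℝ X' y (Y' y)) = _
    rw [map_sub]
    linear_combination (norm := module) e2 - e1
  -- LEMMA A : dω = σ ∧ Ω on U
  have lemA : ∀ y ∈ U, ∀ u v w : Vec, d2 ω y u v w = w21 Omega (σ y) u v w := by
    intro y hy u v w
    have hkey : ∀ a b c : Vec,
        fderiv ℝ (fun t => ω t a b) y c = Omega (fderiv ℝ P y c a) b := by
      intro a b c
      have hga : DifferentiableAt ℝ (fun t => P t a) y :=
        (hdiffP y hy).clm_apply (differentiableAt_const a)
      have hgb : DifferentiableAt ℝ (fun t => P t b) y :=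
        (hdiffP y hy).clm_apply (differentiableAt_const b)
      have hfa : DifferentiableAt ℝ (fun t => Omega (P t a) b) y := diffAt_omega_left hga b
      have hfb : DifferentiableAt ℝ (fun t => Omega a (P t b)) y := diffAt_omega_right hgb a
      have hrw : (fun t => ω t a b)
          = fun t => (2:ℝ)⁻¹ * (Omega (P t a) b + Omega a (P t b)) := by
        funext t; rw [hω]; ring
      have hval : fderiv ℝ (fun t => Omega (P t a) b + Omega a (P t b)) y c
          = Omega (fderiv ℝ P y c a) b + Omega a (fderiv ℝ P y c b) := by
        rw [fderiv_fun_add hfa hfb]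
        simp only [ContinuousLinearMap.add_apply]
        rw [fderiv_omega_left hga b c, fderiv_omega_right hgb a c,
          fderiv_clm_const (hdiffP y hy) a c, fderiv_clm_const (hdiffP y hy) b c]
      rw [hrw, fderiv_const_mul (a := fun t => Omega (P t a) b + Omega a (P t b)) (hfa.add hfb)]
      simp only [ContinuousLinearMap.smul_apply, smul_eq_mul, hval]
      rw [← hQsym y hy c a b]
      ring
    have hd2 : d2 ω y u v w = Omega (fderiv ℝ P y u v) w - Omega (fderiv ℝ P y v u) w
        + Omega (fderiv ℝ P y w u) v := by
      simp only [d2, hkey]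
    have hσval : ∀ t : Vec, σ y t
        = Omega (fderiv ℝ P y (X y) (Y y) - fderiv ℝ P y (Y y) (X y)
          + fderiv ℝ P y (X' y) (Y' y) - fderiv ℝ P y (Y' y) (X' y)) t := by
      intro t
      simp only [hσ, hρ, hρ', hZ, hZ']
      rw [hvbXY y hy, hvbX'Y' y hy, ← Omega_sub_left]
      congr 1
      abel
    have halg := algebra_key (fderiv ℝ P y) (P y) (hXY y hy) (hX'Y' y hy)
      (horth y hy).1 (horth y hy).2.1 (horth y hy).2.2.1 (horth y hy).2.2.2
      (hProj y hy).1 (hProj y hy).2.1 (hProj y hy).2.2.1 (hProj y hy).2.2.2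
      (hQsym y hy) (hz1 y hy) (hz2 y hy) u v w
    show d2 ω y u v w = Omega u v * σ y w - Omega u w * σ y v + Omega v w * σ y u
    rw [hd2, hσval u, hσval v, hσval w]
    exact halg
  -- main computation at a point
  intro x hx a b c d
  have hPdx := hdiffP x hx
  have hfY : DifferentiableAt ℝ (fderiv ℝ Y) x :=
    ((hY.contDiffAt (hU.mem_nhds hx)).fderiv_right (m := 1)
      (WithTop.coe_le_coe.mpr le_top)).differentiableAt one_ne_zero
  have hfX : DifferentiableAt ℝ (fderiv ℝ X) x :=
    ((hX.contDiffAt (hU.mem_nhds hx)).fderiv_right (m := 1)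
      (WithTop.coe_le_coe.mpr le_top)).differentiableAt one_ne_zero
  have hfY' : DifferentiableAt ℝ (fderiv ℝ Y') x :=
    ((hY'.contDiffAt (hU.mem_nhds hx)).fderiv_right (m := 1)
      (WithTop.coe_le_coe.mpr le_top)).differentiableAt one_ne_zero
  have hfX' : DifferentiableAt ℝ (fderiv ℝ X') x :=
    ((hX'.contDiffAt (hU.mem_nhds hx)).fderiv_right (m := 1)
      (WithTop.coe_le_coe.mpr le_top)).differentiableAt one_ne_zero
  have hvb : DifferentiableAt ℝ (vbracket X Y) x := by
    have hrw : vbracket X Y = fun t => fderiv ℝ Y t (X t) - fderiv ℝ X t (Y t) := rfl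
    rw [hrw]
    exact (hfY.clm_apply (hdiffX x hx)).sub (hfX.clm_apply (hdiffY x hx))
  have hvb' : DifferentiableAt ℝ (vbracket X' Y') x := by
    have hrw : vbracket X' Y' = fun t => fderiv ℝ Y' t (X' t) - fderiv ℝ X' t (Y' t) := rfl
    rw [hrw]
    exact (hfY'.clm_apply (hdiffX' x hx)).sub (hfX'.clm_apply (hdiffY' x hx))
  have hZd : DifferentiableAt ℝ Z x := by
    rw [hZ]; exact hvb.sub (hPdx.clm_apply hvb)
  have hZ'd : DifferentiableAt ℝ Z' x := by
    rw [hZ']; exact hPdx.clm_apply hvb'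
  have hρd : ∀ t : Vec, DifferentiableAt ℝ (fun y => ρ y t) x := by
    intro t; simp only [hρ]; exact diffAt_omega_left hZd t
  have hρ'd : ∀ t : Vec, DifferentiableAt ℝ (fun y => ρ' y t) x := by
    intro t; simp only [hρ']; exact diffAt_omega_left hZ'd t
  have hσd : ∀ t : Vec, DifferentiableAt ℝ (fun y => σ y t) x := by
    intro t; simp only [hσ]; exact (hρd t).sub (hρ'd t)
  -- ω slices are C²
  have hωC2 : ∀ p q : Vec, ContDiffAt ℝ 2 (fun t => ω t p q) x := by
    intro p q
    have hP2 : ContDiffAt ℝ 2 P x :=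
      (hP.contDiffAt (hU.mem_nhds hx)).of_le (WithTop.coe_le_coe.mpr le_top)
    have h1 : ContDiffAt ℝ 2 (fun t => P t p) x := hP2.clm_apply contDiffAt_const
    have h2 : ContDiffAt ℝ 2 (fun t => P t q) x := hP2.clm_apply contDiffAt_const
    have h3 : ContDiffAt ℝ 2 (fun t => Omega (P t p) q) x := by
      have hrw : (fun t => Omega (P t p) q) = fun t => omR q (P t p) := by
        funext t; rw [omR_apply]
      rw [hrw]
      exact ((omR q).contDiff.contDiffAt).comp x h1
    have h4 : ContDiffAt ℝ 2 (fun t => Omega p (P t q)) x := by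
      have hrw : (fun t => Omega p (P t q)) = fun t => omL p (P t q) := by
        funext t; rw [omL_apply]
      rw [hrw]
      exact ((omL p).contDiff.contDiffAt).comp x h2
    have hrw : (fun t => ω t p q)
        = fun t => (2:ℝ)⁻¹ * (Omega (P t p) q + Omega p (P t q)) := by
      funext t; rw [hω]; ring
    rw [hrw]
    exact contDiffAt_const.mul (h3.add h4)
  have hsymm : ∀ p q : Vec, IsSymmSndFDerivAt ℝ (fun t => ω t p q) x := fun p q =>
    (hωC2 p q).isSymmSndFDerivAt (by simp)
  have hfd1 : ∀ p q : Vec, DifferentiableAt ℝ (fderiv ℝ (fun t => ω t p q)) x := fun p q =>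
    ((hωC2 p q).fderiv_right (m := 1) (by norm_num)).differentiableAt one_ne_zero
  have happly : ∀ p q r : Vec,
      DifferentiableAt ℝ (fun t => fderiv ℝ (fun s => ω s p q) t r) x :=
    fun p q r => (hfd1 p q).clm_apply (differentiableAt_const r)
  have hfap : ∀ p q r dir : Vec,
      fderiv ℝ (fun t => fderiv ℝ (fun s => ω s p q) t r) x dir
        = fderiv ℝ (fderiv ℝ (fun s => ω s p q)) x dir r :=
    fun p q r dir => fderiv_clm_const (hfd1 p q) r dir
  have hout : ∀ p q r dir : Vec, fderiv ℝ (fun t => d2 ω t p q r) x dir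
      = fderiv ℝ (fderiv ℝ (fun s => ω s q r)) x dir p
        - fderiv ℝ (fderiv ℝ (fun s => ω s p r)) x dir q
        + fderiv ℝ (fderiv ℝ (fun s => ω s p q)) x dir r := by
    intro p q r dir
    have e : (fun t => d2 ω t p q r) = fun t => fderiv ℝ (fun s => ω s q r) t p
        - fderiv ℝ (fun s => ω s p r) t q + fderiv ℝ (fun s => ω s p q) t r := by
      funext t; simp only [d2]
    rw [e, fderiv_fun_add (f := fun t => fderiv ℝ (fun s => ω s q r) t p
        - fderiv ℝ (fun s => ω s p r) t q) ((happly q r p).sub (happly p r q)) (happly p q r),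
      fderiv_fun_sub (happly q r p) (happly p r q)]
    simp only [ContinuousLinearMap.add_apply, ContinuousLinearMap.sub_apply]
    rw [hfap, hfap, hfap]
  have concl1 : w22 Omega (d1 σ x) a b c d = 0 := by
    have hL5 : d3 (fun y => w21 Omega (σ y)) x a b c d = w22 Omega (d1 σ x) a b c d := by
      have hterm : ∀ p q r dir : Vec, fderiv ℝ (fun y => w21 Omega (σ y) p q r) x dir
          = Omega p q * fderiv ℝ (fun y => σ y r) x dir
            - Omega p r * fderiv ℝ (fun y => σ y q) x dir
            + Omega q r * fderiv ℝ (fun y => σ y p) x dir := by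
        intro p q r dir
        have e : (fun y => w21 Omega (σ y) p q r)
            = fun y => Omega p q * σ y r - Omega p r * σ y q + Omega q r * σ y p := by
          funext t; simp only [w21]
        rw [e, fderiv_fun_add (f := fun y => Omega p q * σ y r - Omega p r * σ y q)
            (((hσd r).const_mul _).sub ((hσd q).const_mul _))
            ((hσd p).const_mul _),
          fderiv_fun_sub ((hσd r).const_mul _) ((hσd q).const_mul _),
          fderiv_const_mul (hσd r), fderiv_const_mul (hσd q), fderiv_const_mul (hσd p)]
        simp only [ContinuousLinearMap.add_apply, ContinuousLinearMap.sub_apply,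
          ContinuousLinearMap.smul_apply, smul_eq_mul]
      simp only [d3, hterm, d1, w22]
      ring
    have hcong : d3 (fun y => w21 Omega (σ y)) x a b c d = d3 (d2 ω) x a b c d := by
      have hev : ∀ p q r : Vec, fderiv ℝ (fun y => w21 Omega (σ y) p q r) x
          = fderiv ℝ (fun y => d2 ω y p q r) x := by
        intro p q r
        apply Filter.EventuallyEq.fderiv_eq
        filter_upwards [hU.mem_nhds hx] with t ht
        exact (lemA t ht p q r).symm
      simp only [d3, hev]
    have hdd : d3 (d2 ω) x a b c d = 0 := by
      simp only [d3, hout]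
      rw [(hsymm c d).eq b a, (hsymm b d).eq c a, (hsymm b c).eq d a, (hsymm a d).eq c b,
        (hsymm a c).eq d b, (hsymm a b).eq d c]
      ring
    rw [← hL5, hcong, hdd]
  refine ⟨concl1, ?_⟩
  have hsplit : ∀ u v : Vec, d1 σ x u v = d1 ρ x u v - d1 ρ' x u v := by
    intro u v
    have h1 : ∀ t : Vec, fderiv ℝ (fun y => σ y t) x
        = fderiv ℝ (fun y => ρ y t) x - fderiv ℝ (fun y => ρ' y t) x := by
      intro t
      have e : (fun y => σ y t) = fun y => ρ y t - ρ' y t := by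
        funext s; rw [hσ]
      rw [e, fderiv_fun_sub (hρd t) (hρ'd t)]
    simp only [d1, h1, ContinuousLinearMap.sub_apply]
    ring
  have hw : w22 Omega (d1 ρ x) a b c d - w22 Omega (d1 ρ' x) a b c d
      = w22 Omega (d1 σ x) a b c d := by
    simp only [w22, hsplit]
    ring
  linarith [concl1, hw]
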